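/- Let k be a nonarchimedean local field with normalized valuation v and residue characteristic not equal to 2, let E be an elliptic curve over k given by y² = c·x(x−1)(x−λ) with v(c) = v(λ) = v(λ−1) = 0 and λ ≠ 0, 1. Then E(k) ≠ 2·E(k), i.e., the multiplication-by-2 map on k-points is not surjective. -/

import Mathlib

section Aux

variable {O : Type*} [CommRing O] [IsDomain O] [IsDiscreteValuationRing O]
    {K : Type*} [Field K] [Algebra O K] [IsFractionRing O K]

lemma aux_sq (x : K) (h : ∃ a : O, algebraMap O K a = x ^ 2) :
    ∃ a : O, algebraMap O K a = x := by
  obtain ⟨a, ha⟩ := h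
  exact IsIntegrallyClosed.exists_algebraMap_eq_of_isIntegral_pow (n := 2) two_pos
    (ha ▸ isIntegral_algebraMap)

lemma aux_notint (x : K) (h : ¬ ∃ a : O, algebraMap O K a = x) :
    x ≠ 0 ∧ ∃ τ : O, τ ∈ IsLocalRing.maximalIdeal O ∧ algebraMap O K τ = x⁻¹ := by
  have hx : x ≠ 0 := by rintro rfl; exact h ⟨0, map_zero _⟩
  refine ⟨hx, ?_⟩
  rcases ValuationRing.isInteger_or_isInteger O x with h' | ⟨τ, hτ⟩
  · exact absurd h' h
  · refine ⟨τ, ?_, hτ⟩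
    rw [IsLocalRing.mem_maximalIdeal, mem_nonunits_iff]
    intro hu
    apply h
    refine ⟨(hu.unit⁻¹ : Oˣ), ?_⟩
    have h1 : algebraMap O K ((hu.unit⁻¹ : Oˣ) : O) * x⁻¹ = 1 := by
      rw [← hτ, ← map_mul]
      simp
    have hxinv : x⁻¹ ≠ 0 := inv_ne_zero hx
    field_simp at h1
    simpa [divp, Units.inv_eq_val_inv] using h1

/-- If `y² = x³ + A₂x² + A₄x`, `A₂, A₄` integral, `y ≠ 0`, and
`X₂` (the x-coordinate of the double) is integral, then `x` is integral. -/
lemma aux_double {A₂ A₄ x y X₂ : K} {α₂ α₄ : O}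
    (hA₂ : algebraMap O K α₂ = A₂) (hA₄ : algebraMap O K α₄ = A₄)
    (e : y ^ 2 = x ^ 3 + A₂ * x ^ 2 + A₄ * x)
    (hX₂ : X₂ * (2 * y) ^ 2 = (x ^ 2 - A₄) ^ 2)
    (hX₂int : ∃ a : O, algebraMap O K a = X₂) : ∃ a : O, algebraMap O K a = x := by
  by_contra hx
  obtain ⟨hx0, τ, hτm, hτ⟩ := aux_notint x hx
  obtain ⟨ξ, hξ⟩ := hX₂int
  set φ := algebraMap O K
  have hK : φ (4 * ξ * τ * (1 + α₂ * τ + α₄ * τ ^ 2)) = φ ((1 - α₄ * τ ^ 2) ^ 2) := by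
    simp only [map_mul, map_add, map_sub, map_one, map_pow, map_ofNat]
    rw [hξ, hτ, hA₂, hA₄]
    field_simp
    linear_combination hX₂ - 4 * X₂ * e
  have hO := IsFractionRing.injective O K hK
  have hres := congrArg (IsLocalRing.residue O) hO
  have hτ0 : IsLocalRing.residue O τ = 0 := by
    rwa [← Ideal.Quotient.eq_zero_iff_mem] at hτm
  simp only [map_mul, map_add, map_sub, map_one, map_pow, map_ofNat, hτ0] at hres
  norm_num at hres

lemma aux_some_eq_some {F : Type*} [CommRing F] {W : WeierstrassCurve.Affine F}
    {x₁ y₁ x₂ y₂ : F} (hx : x₁ = x₂) (hy : y₁ = y₂)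
    (h₁ : W.Nonsingular x₁ y₁) (h₂ : W.Nonsingular x₂ y₂) :
    WeierstrassCurve.Affine.Point.some _ _ h₁ = WeierstrassCurve.Affine.Point.some _ _ h₂ := by
  subst hx; subst hy; rfl

end Aux

open Classical in
/-- Let `k` be a nonarchimedean local field of residue characteristic `≠ 2`,
realized as the fraction field `K` of its ring of integers `O` (a complete DVR with finite
residue field of odd characteristic). Let `E` be the elliptic curve over `k` given by
`y² = c·x(x−1)(x−λ)` with `v(c) = v(λ) = v(λ−1) = 0` (i.e. `c`, `λ`, `λ−1` are units of `O`)
and `λ ≠ 0, 1`; we use the isomorphic Weierstrass model `Y² = X(X−c)(X−cλ)` obtained by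
`(X, Y) = (cx, cy)`. Then `E(k) ≠ 2·E(k)`, i.e. multiplication by 2 on `k`-points is not
surjective. -/
theorem stmt3 (O : Type*) [CommRing O] [IsDomain O] [IsDiscreteValuationRing O]
    [IsAdicComplete (IsLocalRing.maximalIdeal O) O]
    [Finite (IsLocalRing.ResidueField O)]
    (hchar : ringChar (IsLocalRing.ResidueField O) ≠ 2)
    (K : Type*) [Field K] [Algebra O K] [IsFractionRing O K]
    (c l : K) (hl0 : l ≠ 0) (hl1 : l ≠ 1)
    (hc : ∃ u : Oˣ, algebraMap O K (u : O) = c)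
    (hlu : ∃ u : Oˣ, algebraMap O K (u : O) = l)
    (hlu1 : ∃ u : Oˣ, algebraMap O K (u : O) = l - 1)
    (W : WeierstrassCurve.Affine K)
    (hW : W = { a₁ := 0, a₂ := -(c + c * l), a₃ := 0, a₄ := c ^ 2 * l, a₆ := 0 }) :
    ¬ Function.Surjective (fun P : W.Point => 2 • P) := by
  intro hsurj
  obtain ⟨uc, hcu⟩ := hc
  obtain ⟨ul, hluu⟩ := hlu
  obtain ⟨ul1, hlu1u⟩ := hlu1
  set φ := algebraMap O K with hφdef
  set F := IsLocalRing.ResidueField O with hFdef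
  set r := IsLocalRing.residue O with hrdef
  have injφ : Function.Injective φ := IsFractionRing.injective O K
  have ha1 : W.a₁ = 0 := by rw [hW]
  have ha2 : W.a₂ = -(c + c * l) := by rw [hW]
  have ha3 : W.a₃ = 0 := by rw [hW]
  have ha4 : W.a₄ = c ^ 2 * l := by rw [hW]
  have ha6 : W.a₆ = 0 := by rw [hW]
  set α₂ : O := -((uc : O) + (uc : O) * (ul : O)) with hα₂def
  set α₄ : O := (uc : O) ^ 2 * (ul : O) with hα₄def
  have hα₂ : φ α₂ = W.a₂ := by
    rw [ha2, hα₂def, map_neg, map_add, map_mul, hcu, hluu]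
  have hα₄ : φ α₄ = W.a₄ := by
    rw [ha4, hα₄def, map_mul, map_pow, hcu, hluu]
  have hc0 : c ≠ 0 := by
    rw [← hcu]
    simpa using fun h => uc.ne_zero (injφ (by simpa using h))
  -- residue char facts
  have h2F : (2 : F) ≠ 0 := by
    intro h
    have hdvd : ringChar F ∣ 2 := by
      rw [← Nat.cast_ofNat (n := 2)] at h
      exact (CharP.cast_eq_zero_iff F (ringChar F) 2).mp h
    rcases (Nat.dvd_prime Nat.prime_two).mp hdvd with h1 | h1
    · exact CharP.char_ne_one F (ringChar F) h1
    · exact hchar h1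
  have h2O : (2 : O) ≠ 0 := by
    intro h
    apply h2F
    have : r (2 : O) = (2 : F) := by rw [map_ofNat]
    rw [← this, h, map_zero]
  have h2K : (2 : K) ≠ 0 := by
    intro h
    apply h2O
    apply injφ
    rw [map_ofNat, map_zero, h]
  -- the 2-torsion point (0,0)
  have hns0 : W.Nonsingular 0 0 := by
    rw [WeierstrassCurve.Affine.nonsingular_zero]
    exact ⟨ha6, Or.inr (by rw [ha4]; exact mul_ne_zero (pow_ne_zero 2 hc0) hl0)⟩
  set P₀ : W.Point := WeierstrassCurve.Affine.Point.some _ _ hns0 with hP₀def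
  have hP₀ne : P₀ ≠ 0 := WeierstrassCurve.Affine.Point.some_ne_zero hns0
  have hnegY : ∀ x y : K, W.negY x y = -y := by
    intro x y; simp [WeierstrassCurve.Affine.negY, ha1, ha3]
  have h2P₀ : 2 • P₀ = 0 := by
    rw [two_smul]
    exact WeierstrassCurve.Affine.Point.add_self_of_Y_eq (by rw [hnegY]; ring)
  have heq : ∀ x y : K, W.Equation x y → y ^ 2 = x ^ 3 + W.a₂ * x ^ 2 + W.a₄ * x := by
    intro x y h
    rw [WeierstrassCurve.Affine.equation_iff] at h
    rw [ha1, ha3, ha6] at h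
    linear_combination h
  -- doubling formula
  have hdouble : ∀ (x y : K) (h : W.Nonsingular x y),
      2 • (WeierstrassCurve.Affine.Point.some _ _ h) ≠ 0 →
      y ≠ 0 ∧ ∀ (X Y : K) (hXY : W.Nonsingular X Y),
        2 • (WeierstrassCurve.Affine.Point.some _ _ h) = WeierstrassCurve.Affine.Point.some _ _ hXY →
        X * (2 * y) ^ 2 = (x ^ 2 - W.a₄) ^ 2 := by
    intro x y h h2ne
    have hyne : y ≠ W.negY x y := by
      intro hy
      exact h2ne (by rw [two_smul]; exact WeierstrassCurve.Affine.Point.add_self_of_Y_eq hy)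
    have hy0 : y ≠ 0 := by
      intro h0
      apply hyne
      rw [hnegY, h0, neg_zero]
    refine ⟨hy0, fun X Y hXY h2eq => ?_⟩
    rw [two_smul, WeierstrassCurve.Affine.Point.add_self_of_Y_ne hyne] at h2eq
    have hXeq : W.addX x x (W.slope x x y y) = X := by
      have := h2eq
      simp only [WeierstrassCurve.Affine.Point.some.injEq] at this
      exact this.1
    have hslope : W.slope x x y y = (3 * x ^ 2 + 2 * W.a₂ * x + W.a₄) / (2 * y) := by
      rw [WeierstrassCurve.Affine.slope_of_Y_ne rfl hyne, hnegY, ha1]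
      ring_nf
    have e := heq x y h.1
    rw [← hXeq]
    rw [WeierstrassCurve.Affine.addX, hslope, ha1]
    have h2y : (2 : K) * y ≠ 0 := mul_ne_zero h2K hy0
    field_simp
    linear_combination (-(4 * W.a₂) - 8 * x) * e
  -- tower integrality
  have L2 : ∀ (j : ℕ) (Q : W.Point), (2 : ℕ) ^ j • Q = P₀ →
      ∃ (x y : K) (h : W.Nonsingular x y), Q = WeierstrassCurve.Affine.Point.some _ _ h ∧
        (∃ a : O, φ a = x) ∧ (∃ b : O, φ b = y) := by
    intro j
    induction j with
    | zero =>
      intro Q hQ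
      rw [pow_zero, one_smul] at hQ
      exact ⟨0, 0, hns0, hQ, ⟨0, map_zero φ⟩, ⟨0, map_zero φ⟩⟩
    | succ n ih =>
      intro Q hQ
      have hQ2 : (2 : ℕ) ^ n • (2 • Q) = P₀ := by
        rw [← mul_smul, ← pow_succ]
        exact hQ
      obtain ⟨X, Y, hXY, h2Q, hXint, -⟩ := ih (2 • Q) hQ2
      have hQne : Q ≠ 0 := by
        rintro rfl
        rw [smul_zero] at h2Q
        exact WeierstrassCurve.Affine.Point.some_ne_zero hXY h2Q.symm
      cases Q with
      | zero => exact absurd rfl hQne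
      | some x y h =>
        have h2Qne : 2 • WeierstrassCurve.Affine.Point.some _ _ h ≠ 0 := by
          rw [h2Q]
          exact WeierstrassCurve.Affine.Point.some_ne_zero hXY
        obtain ⟨hy0, hid⟩ := hdouble x y h h2Qne
        have hXX : X * (2 * y) ^ 2 = (x ^ 2 - W.a₄) ^ 2 := hid X Y hXY h2Q
        have e := heq x y h.1
        have hxint : ∃ a : O, φ a = x := aux_double hα₂ hα₄ e hXX hXint
        have hyint : ∃ b : O, φ b = y := by
          apply aux_sq
          obtain ⟨a, ha⟩ := hxint
          refine ⟨a ^ 3 + α₂ * a ^ 2 + α₄ * a, ?_⟩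
          rw [map_add, map_add, map_mul, map_mul, map_pow, map_pow, ha, hα₂, hα₄, ← e]
        exact ⟨x, y, h, rfl, hxint, hyint⟩
  -- the 2-divisible chain
  choose g hg using hsurj
  set seq : ℕ → W.Point := fun n => Nat.rec P₀ (fun _ Q => g Q) n with hseqdef
  have hseqS : ∀ n, 2 • seq (n + 1) = seq n := fun n => hg (seq n)
  have hpow : ∀ n, (2 : ℕ) ^ n • seq n = P₀ := by
    intro n
    induction n with
    | zero => rw [pow_zero, one_smul]; rfl
    | succ n ih => rw [pow_succ, mul_smul, hseqS n]; exact ih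
  have hkill : ∀ m n : ℕ, m < n → (2 : ℕ) ^ n • seq m = 0 := by
    intro m n hmn
    obtain ⟨k, rfl⟩ : ∃ k, n = (m + 1) + k := ⟨n - (m + 1), by omega⟩
    rw [show (2 : ℕ) ^ ((m + 1) + k) = 2 ^ k * (2 * 2 ^ m) by ring, mul_smul, mul_smul,
      hpow m, h2P₀, smul_zero]
  have hdata : ∀ n : ℕ, ∃ (a b : O) (h : W.Nonsingular (φ a) (φ b)),
      seq n = WeierstrassCurve.Affine.Point.some _ _ h := by
    intro n
    obtain ⟨x, y, h, hQ, ⟨a, ha⟩, ⟨b, hb⟩⟩ := L2 n (seq n) (hpow n)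
    subst ha; subst hb
    exact ⟨a, b, h, hQ⟩
  choose a b hns hsome using hdata
  -- main contradiction for congruent chain points
  have main : ∀ m n : ℕ, m < n → r (a n) = r (a m) → r (b n) = r (b m) → False := by
    intro m n hmn hra hrb
    have h2n0 : (2 : ℕ) ^ n • seq m = 0 := hkill m n hmn
    have hxne : φ (a n) ≠ φ (a m) := by
      intro hx
      rcases WeierstrassCurve.Affine.Y_eq_of_X_eq (hns n).1 (hns m).1 hx with hy | hy
      · have hEq : seq n = seq m := by
          rw [hsome n, hsome m]; exact aux_some_eq_some hx hy _ _
        exact hP₀ne (by rw [← hpow n, hEq, h2n0])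
      · have hEq : seq n = - seq m := by
          rw [hsome n, hsome m, WeierstrassCurve.Affine.Point.neg_some]
          exact aux_some_eq_some hx hy _ _
        exact hP₀ne (by rw [← hpow n, hEq, smul_neg, h2n0, neg_zero])
    have hsub : seq n - seq m = WeierstrassCurve.Affine.Point.some _ _
        (WeierstrassCurve.Affine.nonsingular_add (hns n)
          ((WeierstrassCurve.Affine.nonsingular_neg ..).mpr (hns m))
          (fun hfalse => absurd hfalse.1 hxne)) := by
      rw [sub_eq_add_neg, hsome n, hsome m, WeierstrassCurve.Affine.Point.neg_some]
      exact WeierstrassCurve.Affine.Point.add_of_X_ne hxne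
    have hpow' : (2 : ℕ) ^ n • (seq n - seq m) = P₀ := by
      rw [smul_sub, hpow n, h2n0, sub_zero]
    obtain ⟨X, Y, hXY, hPeq, hXint, -⟩ := L2 n _ hpow'
    rw [hsub] at hPeq
    have hXeq : W.addX (φ (a n)) (φ (a m))
        (W.slope (φ (a n)) (φ (a m)) (φ (b n)) (W.negY (φ (a m)) (φ (b m)))) = X := by
      simp only [WeierstrassCurve.Affine.Point.some.injEq] at hPeq
      exact hPeq.1
    set μ := W.slope (φ (a n)) (φ (a m)) (φ (b n)) (W.negY (φ (a m)) (φ (b m))) with hμdef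
    have hd : φ (a n) - φ (a m) ≠ 0 := sub_ne_zero.mpr hxne
    have hμval : μ * (φ (a n) - φ (a m)) = φ (b n) + φ (b m) := by
      rw [hμdef, WeierstrassCurve.Affine.slope_of_X_ne hxne, hnegY,
        div_mul_cancel₀ _ hd, sub_neg_eq_add]
    obtain ⟨ξ, hξ⟩ := hXint
    have hμ2 : ∃ a : O, φ a = μ ^ 2 := by
      refine ⟨ξ + α₂ + a n + a m, ?_⟩
      rw [map_add, map_add, map_add, hξ, hα₂, ← hXeq, WeierstrassCurve.Affine.addX, ha1]
      ring
    obtain ⟨M, hM⟩ := aux_sq _ hμ2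
    have E1 : M * (a n - a m) = b n + b m := by
      apply injφ
      rw [map_mul, map_sub, map_add, hM]
      exact hμval
    have E2 : ∀ k, (b k) ^ 2 = (a k) ^ 3 + α₂ * (a k) ^ 2 + α₄ * (a k) := by
      intro k
      apply injφ
      rw [map_pow, map_add, map_add, map_mul, map_mul, map_pow, map_pow, hα₂, hα₄]
      exact heq _ _ (hns k).1
    have hanm : a n - a m ≠ 0 := by
      intro h0
      rw [sub_eq_zero] at h0
      exact hxne (by rw [h0])
    have E3 : M * (b n - b m) =
        a n ^ 2 + a n * a m + a m ^ 2 + α₂ * (a n + a m) + α₄ := by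
      apply mul_left_cancel₀ hanm
      linear_combination (b n - b m) * E1 + E2 n - E2 m
    -- pass to residues
    have hram : r (a n - a m) = 0 := by rw [map_sub, hra, sub_self]
    have hrbm : r (b n - b m) = 0 := by rw [map_sub, hrb, sub_self]
    have hrbn : r (b n) = 0 := by
      have h1 := congrArg r E1
      rw [map_mul, hram, mul_zero, map_add, ← hrb] at h1
      rcases mul_eq_zero.mp (show (2 : F) * r (b n) = 0 by linear_combination -h1) with h2 | h2
      · exact absurd h2 h2F
      · exact h2
    have hrα₂ : r α₂ = -(r (uc : O) + r (uc : O) * r (ul : O)) := by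
      rw [hα₂def, map_neg, map_add, map_mul]
    have hrα₄ : r α₄ = r (uc : O) ^ 2 * r (ul : O) := by
      rw [hα₄def, map_mul, map_pow]
    have hC : r (uc : O) ≠ 0 := ((uc.isUnit).map r).ne_zero
    have hL : r (ul : O) ≠ 0 := ((ul.isUnit).map r).ne_zero
    have hL1 : r (ul : O) - 1 ≠ 0 := by
      have h3 := ((ul1.isUnit).map r).ne_zero
      have hul1 : (ul1 : O) = (ul : O) - 1 := by
        apply injφ
        rw [map_sub, map_one, hluu, hlu1u]
      rwa [hul1, map_sub, map_one] at h3
    set C := r (uc : O)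
    set L := r (ul : O)
    have hcube := congrArg r (E2 n)
    simp only [map_pow, map_add, map_mul] at hcube
    rw [hrbn, hrα₂, hrα₄] at hcube
    have hrbm0 : r (b m) = 0 := by rw [← hrb, hrbn]
    have hder := congrArg r E3
    simp only [map_mul, map_add, map_pow, map_sub] at hder
    rw [hrα₂, hrα₄, ← hra, hrbn, hrbm0] at hder
    have hfact : r (a n) * (r (a n) - C) * (r (a n) - C * L) = 0 := by
      linear_combination -hcube
    rcases mul_eq_zero.mp hfact with h' | hroot
    · rcases mul_eq_zero.mp h' with hroot | hroot
      · -- χ = 0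
        apply mul_ne_zero (pow_ne_zero 2 hC) hL
        rw [hroot] at hder
        linear_combination -hder
      · -- χ = C
        have hχC : r (a n) = C := by linear_combination hroot
        apply mul_ne_zero (pow_ne_zero 2 hC)
          (show (1 : F) - L ≠ 0 from fun h => hL1 (by linear_combination -h))
        rw [hχC] at hder
        linear_combination -hder
    · -- χ = C * L
      have hχCL : r (a n) = C * L := by linear_combination hroot
      apply mul_ne_zero (mul_ne_zero (pow_ne_zero 2 hC) hL) hL1
      rw [hχCL] at hder
      linear_combination -hder
  -- pigeonhole on the finite residue field
  obtain ⟨i, j, hij, hpig⟩ :=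
    Finite.exists_ne_map_eq_of_infinite (fun n : ℕ => (r (a n), r (b n)))
  rw [Prod.mk.injEq] at hpig
  rcases hij.lt_or_gt with h | h
  · exact main i j h hpig.1.symm hpig.2.symm
  · exact main j i h hpig.1 hpig.2
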